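/- Let integers 1 ≤ k < t−1 with t+1 ≤ n, p ≥ 2, ν ∈ [0,1], and let f_t(x) = (1/(p+ν))·[Σ_{i=1}^{t−1}|x^{(i)}−x^{(i+1)}|^{p+ν} + Σ_{i=t}^{n}|x^{(i)}|^{p+ν}] − x^{(1)}. Then for every x ∈ ℝⁿ with x^{(i)} = 0 for all i > k, one has ‖∇f_t(x)‖ ≥ 1/√(k+1). -/

import Mathlib

/-- The `i`-th coordinate of `x` in 1-based indexing (0 outside the range `1..n`). -/
noncomputable def coord {n : ℕ} (x : EuclideanSpace ℝ (Fin n)) (i : ℕ) : ℝ :=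
  if h : 1 ≤ i ∧ i ≤ n then x ⟨i - 1, by omega⟩ else 0

/-- The difficult function `f_t` from the lower-bound construction, with exponent `pν = p + ν`. -/
noncomputable def hardFun (n t : ℕ) (pν : ℝ) (x : EuclideanSpace ℝ (Fin n)) : ℝ :=
  (1 / pν) * ((∑ i ∈ Finset.Ico 1 t, |coord x i - coord x (i + 1)| ^ pν)
    + ∑ i ∈ Finset.Icc t n, |coord x i| ^ pν) - coord x 1

/-- The `i`-th coordinate as a continuous linear functional (1-based, 0 outside range). -/
noncomputable def cproj (n i : ℕ) : EuclideanSpace ℝ (Fin n) →L[ℝ] ℝ :=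
  if h : 1 ≤ i ∧ i ≤ n then EuclideanSpace.proj (⟨i - 1, by omega⟩ : Fin n) else 0

lemma coord_eq_cproj {n : ℕ} (x : EuclideanSpace ℝ (Fin n)) (i : ℕ) :
    coord x i = cproj n i x := by
  unfold coord cproj
  split <;> simp

theorem hardFun_gradient_lower_bound
    (n k t : ℕ) (hk : 1 ≤ k) (hkt : k < t - 1) (htn : t + 1 ≤ n)
    (p ν : ℝ) (hp : 2 ≤ p) (hν : ν ∈ Set.Icc (0:ℝ) 1)
    (x : EuclideanSpace ℝ (Fin n)) (hx : ∀ i : ℕ, k < i → coord x i = 0) :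
    1 / Real.sqrt ((k : ℝ) + 1) ≤ ‖gradient (hardFun n t (p + ν)) x‖ := by
  set q : ℝ := p + ν with hqdef
  have hq1 : (1:ℝ) < q := by have := hν.1; simp only [hqdef]; linarith
  have hq0 : q ≠ 0 := by linarith
  -- the difference functionals
  set D : ℕ → (EuclideanSpace ℝ (Fin n) →L[ℝ] ℝ) := fun i => cproj n i - cproj n (i + 1) with hD
  -- the Fréchet derivative
  set L : EuclideanSpace ℝ (Fin n) →L[ℝ] ℝ :=
    (1 / q) • ((∑ i ∈ Finset.Ico 1 t, (q * |D i x| ^ (q - 2) * D i x) • D i)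
      + ∑ i ∈ Finset.Icc t n, (q * |cproj n i x| ^ (q - 2) * cproj n i x) • cproj n i)
      - cproj n 1 with hL
  have hfun : hardFun n t q = fun y : EuclideanSpace ℝ (Fin n) =>
      (1 / q) * ((∑ i ∈ Finset.Ico 1 t, |D i y| ^ q)
        + ∑ i ∈ Finset.Icc t n, |cproj n i y| ^ q) - cproj n 1 y := by
    funext y
    simp [hardFun, coord_eq_cproj, hD, ContinuousLinearMap.sub_apply]
  have hfd : HasFDerivAt (hardFun n t q) L x := by
    rw [hfun]
    have h1 : ∀ i, HasFDerivAt (fun y : EuclideanSpace ℝ (Fin n) => |D i y| ^ q)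
        ((q * |D i x| ^ (q - 2) * D i x) • D i) x := fun i =>
      (hasDerivAt_abs_rpow (D i x) hq1).comp_hasFDerivAt x (D i).hasFDerivAt
    have h2 : ∀ i, HasFDerivAt (fun y : EuclideanSpace ℝ (Fin n) => |cproj n i y| ^ q)
        ((q * |cproj n i x| ^ (q - 2) * cproj n i x) • cproj n i) x := fun i =>
      (hasDerivAt_abs_rpow (cproj n i x) hq1).comp_hasFDerivAt x (cproj n i).hasFDerivAt
    exact (((HasFDerivAt.fun_sum fun i _ => h1 i).add
      (HasFDerivAt.fun_sum fun i _ => h2 i)).const_mul (1 / q)).sub (cproj n 1).hasFDerivAt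
  -- the gradient
  set g : EuclideanSpace ℝ (Fin n) := (InnerProductSpace.toDual ℝ (EuclideanSpace ℝ (Fin n))).symm L with hg
  have hgrad : gradient (hardFun n t q) x = g :=
    ((hasFDerivAt_iff_hasGradientAt).1 hfd).gradient
  -- the test direction u
  set c : ℝ := (Real.sqrt ((k:ℝ) + 1))⁻¹ with hc
  have hsq : (0:ℝ) < Real.sqrt ((k:ℝ) + 1) := Real.sqrt_pos.2 (by positivity)
  set u : EuclideanSpace ℝ (Fin n) := (EuclideanSpace.equiv (Fin n) ℝ).symm (fun j => if (j : ℕ) ≤ k then c else 0)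
    with hu
  have hu_apply : ∀ j : Fin n, u j = if (j : ℕ) ≤ k then c else 0 := fun j => rfl
  have hkn : k + 1 < n := by omega
  -- cproj values on u
  have hcu : ∀ i : ℕ, 1 ≤ i → i ≤ n → cproj n i u = if i - 1 ≤ k then c else 0 := by
    intro i h1 h2
    simp only [cproj, dif_pos (⟨h1, h2⟩ : 1 ≤ i ∧ i ≤ n), PiLp.proj_apply]
    exact hu_apply _
  -- compute L u = -c
  have hLu : L u = -c := by
    have hsum1 : ∀ i ∈ Finset.Ico 1 t, (q * |D i x| ^ (q - 2) * D i x) * D i u = 0 := by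
      intro i hi
      simp only [Finset.mem_Ico] at hi
      by_cases hik : i ≤ k
      · have hDu : D i u = 0 := by
          have e1 := hcu i hi.1 (by omega)
          have e2 := hcu (i + 1) (by omega) (by omega)
          rw [if_pos (by omega)] at e1
          rw [if_pos (by omega)] at e2
          simp [hD, ContinuousLinearMap.sub_apply, e1, e2]
        rw [hDu, mul_zero]
      · have hDx : D i x = 0 := by
          have e1 : coord x i = 0 := hx i (by omega)
          have e2 : coord x (i + 1) = 0 := hx (i + 1) (by omega)
          rw [coord_eq_cproj] at e1 e2
          simp [hD, ContinuousLinearMap.sub_apply, e1, e2]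
        rw [hDx, mul_zero, zero_mul]
    have hsum2 : ∀ i ∈ Finset.Icc t n,
        (q * |cproj n i x| ^ (q - 2) * cproj n i x) * cproj n i u = 0 := by
      intro i hi
      simp only [Finset.mem_Icc] at hi
      have e1 : coord x i = 0 := hx i (by omega)
      rw [coord_eq_cproj] at e1
      rw [e1, mul_zero, zero_mul]
    have hc1 : cproj n 1 u = c := by
      have := hcu 1 le_rfl (by omega)
      rwa [if_pos (by omega)] at this
    simp only [hL, ContinuousLinearMap.sub_apply, ContinuousLinearMap.smul_apply,
      ContinuousLinearMap.add_apply, ContinuousLinearMap.coe_sum', Finset.sum_apply,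
      ContinuousLinearMap.smul_apply, smul_eq_mul]
    rw [Finset.sum_congr rfl hsum1, Finset.sum_congr rfl hsum2, hc1]
    simp
  -- inner product with u
  have hinner : inner ℝ g u = L u := InnerProductSpace.toDual_symm_apply
  -- norm of u
  have hnu : ‖u‖ = 1 := by
    rw [EuclideanSpace.norm_eq]
    have hsum : (∑ j : Fin n, ‖u j‖ ^ 2) = ((k:ℝ) + 1) * c ^ 2 := by
      have : ∀ j : Fin n, ‖u j‖ ^ 2 = if (j : ℕ) ≤ k then c ^ 2 else 0 := by
        intro j; rw [hu_apply]; split <;> simp [Real.norm_eq_abs, sq_abs]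
      rw [Finset.sum_congr rfl fun j _ => this j]
      rw [Finset.sum_ite, Finset.sum_const, Finset.sum_const_zero, add_zero, nsmul_eq_mul]
      congr 1
      have : (Finset.univ.filter (fun j : Fin n => (j : ℕ) ≤ k)).card = k + 1 := by
        rw [Finset.card_filter]
        rw [Fin.sum_univ_eq_sum_range (fun i => if i ≤ k then 1 else 0)]
        rw [← Finset.sum_subset (Finset.range_subset_range.2 (by omega : k + 1 ≤ n))
          (fun i _ hi => by rw [if_neg (by simp at hi; omega)])]
        have hall : ∀ i ∈ Finset.range (k + 1), i ≤ k := fun i hi => by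
          simp only [Finset.mem_range] at hi; omega
        rw [Finset.sum_ite_of_true hall]
        simp
      rw [this]; push_cast; ring
    have hck : c ^ 2 = ((k:ℝ) + 1)⁻¹ := by
      rw [hc, inv_pow, Real.sq_sqrt (by positivity)]
    rw [hsum, hck, mul_inv_cancel₀ (by positivity), Real.sqrt_one]
  -- conclude
  have hbound : |inner ℝ g u| ≤ ‖g‖ * ‖u‖ := abs_real_inner_le_norm g u
  rw [hinner, hLu, hnu, mul_one, abs_neg, abs_of_pos (by positivity)] at hbound
  rw [hgrad, one_div]
  exact hbound
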